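/- A real n×n matrix M generates a semigroup of stochastic matrices, i.e. exp(tM) is stochastic (nonnegative entries, columns summing to 1) for all t ≥ 0, if and only if M satisfies the Kolmogorov conditions: M_{ij} ≥ 0 for all i ≠ j, and every column of M sums to zero. -/

import Mathlib

open Matrix

/-- A real square matrix is column-stochastic. -/
def IsColStochastic {n : ℕ} (T : Matrix (Fin n) (Fin n) ℝ) : Prop :=
  (∀ i j, 0 ≤ T i j) ∧ ∀ j, ∑ i, T i j = 1

/-- Kolmogorov conditions for a generator. -/
def IsKolmogorov {n : ℕ} (M : Matrix (Fin n) (Fin n) ℝ) : Prop :=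
  (∀ i j, i ≠ j → 0 ≤ M i j) ∧ ∀ j, ∑ i, M i j = 0

namespace StochSemigroupAux

open NormedSpace Filter Topology

variable {n : ℕ}

/-- Entry-extraction continuous linear map. -/
noncomputable def entryCLM (i j : Fin n) : Matrix (Fin n) (Fin n) ℝ →L[ℝ] ℝ :=
  LinearMap.toContinuousLinearMap
    { toFun := fun A => A i j
      map_add' := fun _ _ => rfl
      map_smul' := fun _ _ => rfl }

@[simp] lemma entryCLM_apply (i j : Fin n) (A : Matrix (Fin n) (Fin n) ℝ) :
    entryCLM i j A = A i j := rfl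

/-- Column-sum continuous linear map. -/
noncomputable def colSumCLM (j : Fin n) : Matrix (Fin n) (Fin n) ℝ →L[ℝ] ℝ :=
  LinearMap.toContinuousLinearMap
    { toFun := fun A => ∑ i, A i j
      map_add' := fun A B => by simp [Finset.sum_add_distrib]
      map_smul' := fun c A => by simp [Finset.mul_sum] }

@[simp] lemma colSumCLM_apply (j : Fin n) (A : Matrix (Fin n) (Fin n) ℝ) :
    colSumCLM j A = ∑ i, A i j := rfl

lemma hasDerivAt_clm_exp (M : Matrix (Fin n) (Fin n) ℝ)
    (L : Matrix (Fin n) (Fin n) ℝ →L[ℝ] ℝ) :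
    HasDerivAt (fun t : ℝ => L (exp (t • M))) (L M) 0 := by
  letI : SeminormedRing (Matrix (Fin n) (Fin n) ℝ) := Matrix.linftyOpSemiNormedRing
  letI : NormedRing (Matrix (Fin n) (Fin n) ℝ) := Matrix.linftyOpNormedRing
  letI : NormedAlgebra ℝ (Matrix (Fin n) (Fin n) ℝ) := Matrix.linftyOpNormedAlgebra
  have h := hasDerivAt_exp_smul_const M (0 : ℝ)
  rw [zero_smul, exp_zero, one_mul] at h
  exact L.hasFDerivAt.comp_hasDerivAt 0 h

lemma slope_nonneg_lim (f : ℝ → ℝ) (d : ℝ) (h : HasDerivAt f d 0)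
    (hpos : ∀ t : ℝ, 0 < t → 0 ≤ f t) (h0 : f 0 = 0) : 0 ≤ d := by
  have hs : Tendsto (slope f 0) (𝓝[>] 0) (𝓝 d) :=
    (hasDerivAt_iff_tendsto_slope.mp h).mono_left
      (nhdsWithin_mono _ (fun x hx => ne_of_gt hx))
  refine ge_of_tendsto hs ?_
  filter_upwards [self_mem_nhdsWithin] with t ht
  rw [slope_def_field, h0, sub_zero, sub_zero]
  exact div_nonneg (hpos t ht) ht.le

lemma slope_const_lim (f : ℝ → ℝ) (d : ℝ) (h : HasDerivAt f d 0)
    (hconst : ∀ t : ℝ, 0 ≤ t → f t = 1) : d = 0 := by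
  have hs : Tendsto (slope f 0) (𝓝[>] 0) (𝓝 d) :=
    (hasDerivAt_iff_tendsto_slope.mp h).mono_left
      (nhdsWithin_mono _ (fun x hx => ne_of_gt hx))
  have hz : Tendsto (slope f 0) (𝓝[>] 0) (𝓝 0) := by
    refine Tendsto.congr' ?_ tendsto_const_nhds
    filter_upwards [self_mem_nhdsWithin] with t ht
    rw [slope_def_field, hconst t ht.le, hconst 0 le_rfl, sub_self, zero_div]
  exact tendsto_nhds_unique hs hz

lemma clm_exp_eq (A : Matrix (Fin n) (Fin n) ℝ) (L : Matrix (Fin n) (Fin n) ℝ →L[ℝ] ℝ) :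
    L (exp A) = ∑' k : ℕ, L ((k.factorial⁻¹ : ℝ) • A ^ k) := by
  letI : SeminormedRing (Matrix (Fin n) (Fin n) ℝ) := Matrix.linftyOpSemiNormedRing
  letI : NormedRing (Matrix (Fin n) (Fin n) ℝ) := Matrix.linftyOpNormedRing
  letI : NormedAlgebra ℝ (Matrix (Fin n) (Fin n) ℝ) := Matrix.linftyOpNormedAlgebra
  rw [exp_eq_tsum ℝ]
  exact L.map_tsum (expSeries_summable' (𝕂 := ℝ) A)

lemma pow_nonneg_entries (A : Matrix (Fin n) (Fin n) ℝ) (hA : ∀ i j, 0 ≤ A i j) (k : ℕ) :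
    ∀ i j, 0 ≤ (A ^ k) i j := by
  induction k with
  | zero => intro i j; simp only [pow_zero, Matrix.one_apply]; positivity
  | succ k ih =>
    intro i j
    rw [pow_succ, Matrix.mul_apply]
    exact Finset.sum_nonneg fun l _ => mul_nonneg (ih i l) (hA l j)

lemma exp_nonneg_entries (A : Matrix (Fin n) (Fin n) ℝ) (hA : ∀ i j, 0 ≤ A i j) (i j : Fin n) :
    0 ≤ exp A i j := by
  have h := clm_exp_eq A (entryCLM i j)
  simp only [entryCLM_apply] at h
  rw [h]
  refine tsum_nonneg fun k => ?_
  have : ((k.factorial⁻¹ : ℝ) • A ^ k) i j = (k.factorial⁻¹ : ℝ) * (A ^ k) i j := rfl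
  rw [this]
  exact mul_nonneg (by positivity) (pow_nonneg_entries A hA k i j)

lemma colsum_pow (M : Matrix (Fin n) (Fin n) ℝ) (hM : ∀ j, ∑ i, M i j = 0) (k : ℕ) (hk : k ≠ 0)
    (j : Fin n) : ∑ i, (M ^ k) i j = 0 := by
  obtain ⟨m, rfl⟩ := Nat.exists_eq_succ_of_ne_zero hk
  simp_rw [pow_succ', Matrix.mul_apply]
  rw [Finset.sum_comm]
  simp [← Finset.sum_mul, hM]

lemma colsum_exp (M : Matrix (Fin n) (Fin n) ℝ) (hM : ∀ j, ∑ i, M i j = 0) (j : Fin n) :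
    ∑ i, exp M i j = 1 := by
  have h := clm_exp_eq M (colSumCLM j)
  simp only [colSumCLM_apply] at h
  rw [h]
  rw [tsum_eq_single 0 ?_]
  · simp [Matrix.one_apply]
  · intro k hk
    have : ((k.factorial⁻¹ : ℝ) • M ^ k) = fun i l => (k.factorial⁻¹ : ℝ) * (M ^ k) i l := rfl
    rw [this]
    simp [← Finset.mul_sum, colsum_pow M hM k hk j]

lemma exp_smul_one (s : ℝ) :
    exp (s • (1 : Matrix (Fin n) (Fin n) ℝ)) = Real.exp s • (1 : Matrix (Fin n) (Fin n) ℝ) := by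
  letI : SeminormedRing (Matrix (Fin n) (Fin n) ℝ) := Matrix.linftyOpSemiNormedRing
  letI : NormedRing (Matrix (Fin n) (Fin n) ℝ) := Matrix.linftyOpNormedRing
  letI : NormedAlgebra ℝ (Matrix (Fin n) (Fin n) ℝ) := Matrix.linftyOpNormedAlgebra
  have h1 : s • (1 : Matrix (Fin n) (Fin n) ℝ) = algebraMap ℝ _ s :=
    (Algebra.algebraMap_eq_smul_one s).symm
  rw [h1, Real.exp_eq_exp_ℝ]
  exact (algebraMap_exp_comm (𝔸 := Matrix (Fin n) (Fin n) ℝ) s).symm.trans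
    (Algebra.algebraMap_eq_smul_one _)

end StochSemigroupAux

open StochSemigroupAux NormedSpace in
theorem stochastic_semigroup_iff_kolmogorov {n : ℕ} (M : Matrix (Fin n) (Fin n) ℝ) :
    (∀ t : ℝ, 0 ≤ t → IsColStochastic (NormedSpace.exp (t • M))) ↔ IsKolmogorov M := by
  constructor
  · intro h
    constructor
    · intro i j hij
      refine slope_nonneg_lim (fun t => exp (t • M) i j) (M i j) ?_ ?_ ?_
      · exact hasDerivAt_clm_exp M (entryCLM i j)
      · intro t ht; exact (h t ht.le).1 i j
      · show exp ((0:ℝ) • M) i j = 0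
        rw [zero_smul, exp_zero]; exact Matrix.one_apply_ne hij
    · intro j
      refine slope_const_lim (fun t => ∑ i, exp (t • M) i j) (∑ i, M i j) ?_ ?_
      · exact hasDerivAt_clm_exp M (colSumCLM j)
      · intro t ht; exact (h t ht).2 j
  · rintro ⟨hoff, hsum⟩ t ht
    constructor
    · -- nonnegativity of entries
      set c : ℝ := ∑ l, |M l l| with hc
      set A : Matrix (Fin n) (Fin n) ℝ := M + c • 1 with hAdef
      have hA : ∀ i j, 0 ≤ A i j := by
        intro i j
        rcases eq_or_ne i j with rfl | hij
        · have h1 : |M i i| ≤ c :=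
            Finset.single_le_sum (fun l _ => abs_nonneg (M l l)) (Finset.mem_univ i)
          have : A i i = M i i + c := by simp [hAdef, Matrix.one_apply]
          rw [this]
          linarith [neg_abs_le (M i i)]
        · have : A i j = M i j := by simp [hAdef, Matrix.one_apply_ne hij]
          rw [this]; exact hoff i j hij
      have hsplit : t • M = t • A + (-(t * c)) • (1 : Matrix (Fin n) (Fin n) ℝ) := by
        rw [hAdef]
        rw [smul_add, smul_smul]
        module
      have hcomm : Commute (t • A) ((-(t * c)) • (1 : Matrix (Fin n) (Fin n) ℝ)) :=
        ((Commute.one_right (t • A)).smul_right _)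
      have hexp : exp (t • M) = Real.exp (-(t * c)) • exp (t • A) := by
        rw [hsplit, Matrix.exp_add_of_commute _ _ hcomm, exp_smul_one,
          mul_smul_comm, mul_one]
      intro i j
      rw [hexp]
      have h1 : 0 ≤ exp (t • A) i j := by
        refine exp_nonneg_entries _ (fun i j => ?_) i j
        have : (t • A) i j = t * A i j := rfl
        rw [this]
        exact mul_nonneg ht (hA i j)
      have h2 : (Real.exp (-(t * c)) • exp (t • A)) i j
          = Real.exp (-(t * c)) * exp (t • A) i j := rfl
      rw [h2]
      exact mul_nonneg (Real.exp_nonneg _) h1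
    · intro j
      refine colsum_exp (t • M) (fun j => ?_) j
      have : ∀ i, (t • M) i j = t * M i j := fun i => rfl
      simp_rw [this, ← Finset.mul_sum, hsum j, mul_zero]
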